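/- An argument ⟨Γ, Δ⟩ is (0,1]-symmetric valid if and only if some γ ∈ Γ is classically unsatisfiable or some δ ∈ Δ is a classical tautology. -/

import Mathlib

/-- Propositional formulas: atoms, negation, disjunction. -/
inductive Fml : Type
  | atom : ℕ → Fml
  | neg : Fml → Fml
  | or : Fml → Fml → Fml
deriving DecidableEq

namespace Fml

def and (φ ψ : Fml) : Fml := neg (or (neg φ) (neg ψ))

def bot : Fml := and (atom 0) (neg (atom 0))

def imp (φ ψ : Fml) : Fml := or (neg φ) ψ

def eval (v : ℕ → Bool) : Fml → Bool
  | atom n => v n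
  | neg φ => !(eval v φ)
  | or φ ψ => (eval v φ) || (eval v ψ)

end Fml

/-- Two formulas are jointly classically unsatisfiable. -/
def Incompatible (φ ψ : Fml) : Prop :=
  ∀ v : ℕ → Bool, ¬(φ.eval v = true ∧ ψ.eval v = true)

/-- Classical (Set-Set) validity. -/
def ClValid (Γ Δ : Finset Fml) : Prop :=
  ∀ v : ℕ → Bool, (∀ γ ∈ Γ, γ.eval v = true) → ∃ δ ∈ Δ, δ.eval v = true

/-- Classical single-conclusion entailment. -/
def ClEntails (Γ : Finset Fml) (φ : Fml) : Prop :=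
  ∀ v : ℕ → Bool, (∀ γ ∈ Γ, γ.eval v = true) → φ.eval v = true

def ClConsistent (Γ : Finset Fml) : Prop :=
  ∃ v : ℕ → Bool, ∀ γ ∈ Γ, γ.eval v = true

def Tautology (φ : Fml) : Prop := ∀ v : ℕ → Bool, φ.eval v = true

/-- A probability distribution on formulas. -/
structure ProbDist where
  p : Fml → ℝ
  nonneg : ∀ φ, 0 ≤ p φ
  le_one : ∀ φ, p φ ≤ 1
  bot_eq : p Fml.bot = 0
  neg_eq : ∀ φ, p (Fml.neg φ) = 1 - p φ
  add_eq : ∀ φ ψ, Incompatible φ ψ → p (Fml.or φ ψ) = p φ + p ψ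

/-- A probabilistic model: worlds with classical valuations and a finitely
additive probability measure on subsets of worlds. -/
structure PModel where
  W : Type
  nonempty : Nonempty W
  val : W → ℕ → Bool
  μ : Set W → ℝ
  nonneg : ∀ A : Set W, 0 ≤ μ A
  empty_eq : μ (∅ : Set W) = 0
  univ_eq : μ (Set.univ : Set W) = 1
  add_eq : ∀ A B : Set W, Disjoint A B → μ (A ∪ B) = μ A + μ B

/-- Denotation of a formula in a model. -/
def PModel.den (M : PModel) (φ : Fml) : Set M.W := {w | φ.eval (M.val w) = true}

/-- Induced probability of a formula in a model. -/
def PModel.prob (M : PModel) (φ : Fml) : ℝ := M.μ (M.den φ)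

/-- An upset of [0,1]: contains 1, excludes 0, upward closed within [0,1]. -/
def IsUpset (α : Set ℝ) : Prop :=
  α ⊆ Set.Icc 0 1 ∧ (1 : ℝ) ∈ α ∧ (0 : ℝ) ∉ α ∧
    ∀ x ∈ α, ∀ y ∈ Set.Icc (0:ℝ) 1, x ≤ y → y ∈ α

/-- The mirror image of α. -/
def mirror (α : Set ℝ) : Set ℝ := {x ∈ Set.Icc (0:ℝ) 1 | 1 - x ∈ α}

/-- The dual of α. -/
def dual (α : Set ℝ) : Set ℝ := Set.Icc (0:ℝ) 1 \ mirror α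

/-- Conjunction of a finite set of formulas. -/
noncomputable def conj (Γ : Finset Fml) : Fml := Γ.toList.foldr Fml.and (Fml.neg Fml.bot)

/-- Disjunction of a finite set of formulas. -/
noncomputable def disj (Δ : Finset Fml) : Fml := Δ.toList.foldr Fml.or Fml.bot

/-- Disjunction of a list of formulas. -/
def disjList (l : List Fml) : Fml := l.foldr Fml.or Fml.bot

/-- α-preservation validity (over probability distributions). -/
def PresValid (α : Set ℝ) (Γ Δ : Finset Fml) : Prop :=
  ∀ P : ProbDist, (∀ γ ∈ Γ, P.p γ ∈ α) → ∃ δ ∈ Δ, P.p δ ∈ α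

/-- α-preservation validity (over probabilistic models). -/
def PresValidM (α : Set ℝ) (Γ Δ : Finset Fml) : Prop :=
  ∀ M : PModel, (∀ γ ∈ Γ, M.prob γ ∈ α) → ∃ δ ∈ Δ, M.prob δ ∈ α

/-- α-symmetric validity. -/
def SymValid (α : Set ℝ) (Γ Δ : Finset Fml) : Prop :=
  ∀ P : ProbDist, (∀ γ ∈ Γ, P.p γ ∈ α) → ∃ δ ∈ Δ, P.p δ ∉ mirror α

/-- α-satisfiability of a finite set of formulas. -/
def Satis (α : Set ℝ) (Γ : Finset Fml) : Prop :=
  ∃ P : ProbDist, ∀ γ ∈ Γ, P.p γ ∈ α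


lemma countP_bnot {α : Type*} (p : α → Bool) (l : List α) :
    l.countP (fun a => !p a) + l.countP p = l.length := by
  induction l with
  | nil => simp
  | cons a l ih =>
    by_cases h : p a <;> simp [List.countP_cons, h, ← ih] <;> omega

lemma countP_bor {α : Type*} (p q : α → Bool) (l : List α)
    (h : ∀ a ∈ l, ¬(p a = true ∧ q a = true)) :
    l.countP (fun a => p a || q a) = l.countP p + l.countP q := by
  induction l with
  | nil => simp
  | cons a l ih =>
    have ha := h a (List.mem_cons_self)
    have ih' := ih (fun b hb => h b (List.mem_cons_of_mem a hb))
    by_cases hp : p a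
    · by_cases hq : q a
      · exact absurd ⟨hp, hq⟩ ha
      · simp [List.countP_cons, hp, hq, ih']; omega
    · by_cases hq : q a <;> simp [List.countP_cons, hp, hq, ih'] <;> omega

/-- Uniform probability distribution over a nonempty list of valuations. -/
noncomputable def uniP (L : List (ℕ → Bool)) (hL : L ≠ []) : ProbDist where
  p φ := (L.countP (fun v => φ.eval v)) / L.length
  nonneg φ := by positivity
  le_one φ := by
    have hlen : 0 < (L.length : ℝ) := by
      exact_mod_cast List.length_pos_iff.mpr hL
    rw [div_le_one hlen]
    exact_mod_cast List.countP_le_length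
  bot_eq := by
    have : L.countP (fun v => Fml.bot.eval v) = 0 := by
      apply List.countP_eq_zero.mpr
      intro v _
      simp [Fml.bot, Fml.and, Fml.eval]
    simp [this]
  neg_eq φ := by
    have hlen : 0 < (L.length : ℝ) := by
      exact_mod_cast List.length_pos_iff.mpr hL
    have key : L.countP (fun v => (Fml.neg φ).eval v) + L.countP (fun v => φ.eval v)
        = L.length := by
      have := countP_bnot (fun v => φ.eval v) L
      simpa [Fml.eval] using this
    have keyR : (L.countP (fun v => (Fml.neg φ).eval v) : ℝ)
        + (L.countP (fun v => φ.eval v) : ℝ) = (L.length : ℝ) := by exact_mod_cast key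
    field_simp
    linarith
  add_eq φ ψ h := by
    have key : L.countP (fun v => (Fml.or φ ψ).eval v)
        = L.countP (fun v => φ.eval v) + L.countP (fun v => ψ.eval v) := by
      have := countP_bor (fun v => φ.eval v) (fun v => ψ.eval v) L
        (fun v _ => h v)
      simpa [Fml.eval] using this
    beta_reduce
    rw [show (L.countP (fun v => (Fml.or φ ψ).eval v) : ℝ)
        = (L.countP (fun v => φ.eval v) : ℝ) + (L.countP (fun v => ψ.eval v) : ℝ) by
          exact_mod_cast key]
    ring

lemma ProbDist.p_unsat (P : ProbDist) {φ : Fml} (h : ∀ v, φ.eval v = false) :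
    P.p φ = 0 := by
  have hinc : Incompatible φ (Fml.neg Fml.bot) := by
    intro v hv
    rw [h v] at hv
    exact absurd hv.1 (by simp)
  have h1 := P.add_eq φ (Fml.neg Fml.bot) hinc
  have h2 := P.neg_eq Fml.bot
  have h3 := P.bot_eq
  have h4 := P.le_one (Fml.or φ (Fml.neg Fml.bot))
  have h5 := P.nonneg φ
  linarith

lemma ProbDist.p_taut (P : ProbDist) {φ : Fml} (h : Tautology φ) : P.p φ = 1 := by
  have hun : ∀ v, (Fml.neg φ).eval v = false := by
    intro v; simp [Fml.eval, h v]
  have := P.p_unsat hun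
  have h2 := P.neg_eq φ
  linarith

/-- (0,1]-symmetric validity holds iff some premise is a classical
contradiction or some conclusion is a classical tautology. -/
theorem stmt17 (Γ Δ : Finset Fml) :
    (¬ ∃ P : ProbDist, (∀ γ ∈ Γ, 0 < P.p γ) ∧ ∀ δ ∈ Δ, P.p δ < 1) ↔
      ((∃ γ ∈ Γ, ¬ ClConsistent {γ}) ∨ ∃ δ ∈ Δ, Tautology δ) := by
  constructor
  · intro h
    by_contra hc
    push_neg at hc
    obtain ⟨h1, h2⟩ := hc
    have hfe : ∀ γ ∈ Γ, ∃ v : ℕ → Bool, γ.eval v = true := by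
      intro γ hγ
      obtain ⟨v, hv⟩ := h1 γ hγ
      exact ⟨v, hv γ (Finset.mem_singleton_self γ)⟩
    choose! f hf using hfe
    have hge : ∀ δ ∈ Δ, ∃ v : ℕ → Bool, δ.eval v = false := by
      intro δ hδ
      have := h2 δ hδ
      unfold Tautology at this
      push_neg at this
      obtain ⟨v, hv⟩ := this
      exact ⟨v, by simpa using hv⟩
    choose! g hg using hge
    set L : List (ℕ → Bool) := (fun _ => true) :: (Γ.toList.map f ++ Δ.toList.map g)
      with hLdef
    have hL : L ≠ [] := by simp [hLdef]
    have hlen : 0 < (L.length : ℝ) := by exact_mod_cast List.length_pos_iff.mpr hL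
    apply h
    refine ⟨uniP L hL, ?_, ?_⟩
    · intro γ hγ
      have hmem : f γ ∈ L := by
        simp only [hLdef, List.mem_cons, List.mem_append, List.mem_map]
        right; left
        exact ⟨γ, Finset.mem_toList.mpr hγ, rfl⟩
      have hpos : 0 < L.countP (fun v => γ.eval v) :=
        List.countP_pos_iff.mpr ⟨f γ, hmem, by simpa using hf γ hγ⟩
      show 0 < (L.countP (fun v => γ.eval v) : ℝ) / L.length
      apply div_pos _ hlen
      exact_mod_cast hpos
    · intro δ hδ
      have hmem : g δ ∈ L := by
        simp only [hLdef, List.mem_cons, List.mem_append, List.mem_map]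
        right; right
        exact ⟨δ, Finset.mem_toList.mpr hδ, rfl⟩
      have hlt : L.countP (fun v => δ.eval v) < L.length := by
        rcases lt_or_eq_of_le (List.countP_le_length (p := fun v => δ.eval v) (l := L)) with
          h' | h'
        · exact h'
        · exfalso
          have := List.countP_eq_length.mp h' (g δ) hmem
          simp [hg δ hδ] at this
      show (L.countP (fun v => δ.eval v) : ℝ) / L.length < 1
      rw [div_lt_one hlen]
      exact_mod_cast hlt
  · rintro (⟨γ, hγ, hγu⟩ | ⟨δ, hδ, hδt⟩) ⟨P, hΓ, hΔ⟩
    · have hall : ∀ v, γ.eval v = false := by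
        intro v
        by_contra hv
        exact hγu ⟨v, fun x hx => by
          rw [Finset.mem_singleton] at hx
          subst hx
          simpa using hv⟩
      have := P.p_unsat hall
      have := hΓ γ hγ
      linarith
    · have := P.p_taut hδt
      have := hΔ δ hδ
      linarith
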